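/- arXiv:2203.01119 — 3 statements merged into one kernel-verified Lean document; each statement's English description precedes it below -/
import Mathlib

section
/- Let M be a monoid equipped with a linear order such that multiplication is strictly monotone on both sides and such that the identity 1 is the least element of M. Let A be a subset of M with 1 ∉ A that is well-ordered (the restriction of < to A is well-founded). Then the set C = { l.prod : l a nonempty finite list all of whose entries lie in A } is well-ordered (the restriction of < to C is well-founded), and moreover, for each t ∈ C there are only finitely many nonempty finite lists l with all entries in A such that l.prod = t. -/
/-- Neumann's combinatorial lemma: if `A` is a well-ordered subset (for `<`) of a
linearly ordered monoid in which multiplication is strictly monotone on both sides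
and `1` is the least element, and `1 ∉ A`, then the set of products of nonempty
finite lists with entries in `A` is well-ordered, and each such product has only
finitely many representing lists. -/
theorem neumann_combinatorial_lemma {M : Type*} [Monoid M] [LinearOrder M]
    (hmul_right : ∀ a b c : M, a < b → a * c < b * c)
    (hmul_left : ∀ a b c : M, a < b → c * a < c * b)
    (hone : ∀ a : M, 1 ≤ a)
    (A : Set M) (hA1 : (1 : M) ∉ A) (hA : A.WellFoundedOn (· < ·)) :
    ({t : M | ∃ l : List M, l ≠ [] ∧ (∀ x ∈ l, x ∈ A) ∧ l.prod = t}.WellFoundedOn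
        (· < ·)) ∧
    ∀ t ∈ {t : M | ∃ l : List M, l ≠ [] ∧ (∀ x ∈ l, x ∈ A) ∧ l.prod = t},
      {l : List M | l ≠ [] ∧ (∀ x ∈ l, x ∈ A) ∧ l.prod = t}.Finite := by
  classical
  -- monotonicity of multiplication in the non-strict sense
  have hmul_le : ∀ {a b c d : M}, a ≤ b → c ≤ d → a * c ≤ b * d := by
    intro a b c d hab hcd
    rcases hab.lt_or_eq with h | rfl
    · rcases hcd.lt_or_eq with h' | rfl
      · exact ((hmul_right a b c h).trans (hmul_left c d b h')).le
      · exact (hmul_right a b c h).le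
    · rcases hcd.lt_or_eq with h' | rfl
      · exact (hmul_left c d a h').le
      · exact le_rfl
  set C : Set M := {t : M | ∃ l : List M, l ≠ [] ∧ (∀ x ∈ l, x ∈ A) ∧ l.prod = t}
    with hCdef
  -- Part 1: C is well-ordered, via Higman's lemma
  have hprod_mono : ∀ l1 l2 : List M, List.SublistForall₂ (· ≤ ·) l1 l2 →
      l1.prod ≤ l2.prod := by
    intro l1 l2 h
    induction h with
    | nil => exact hone _
    | cons hab _ ih =>
      rw [List.prod_cons, List.prod_cons]
      exact hmul_le hab ih
    | cons_right _ ih =>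
      rw [List.prod_cons]
      calc _ ≤ _ := ih
        _ = 1 * _ := (one_mul _).symm
        _ ≤ _ := hmul_le (hone _) le_rfl
  have hApwo : A.IsPWO := Set.isPWO_iff_isWF.mpr hA
  have hlists :=
    Set.PartiallyWellOrderedOn.partiallyWellOrderedOn_sublistForall₂
      ((· ≤ ·) : M → M → Prop) hApwo
  have himg : ((fun l : List M => l.prod) '' {l | ∀ x, x ∈ l → x ∈ A}).IsPWO :=
    hlists.image_of_monotone_on fun l1 _ l2 _ h12 => hprod_mono l1 l2 h12
  have hCwf : C.WellFoundedOn (· < ·) := by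
    have hsub : C ⊆ (fun l : List M => l.prod) '' {l | ∀ x, x ∈ l → x ∈ A} := by
      rintro t ⟨l, -, hl, rfl⟩
      exact ⟨l, hl, rfl⟩
    exact (himg.mono hsub).isWF
  refine ⟨hCwf, ?_⟩
  -- cancellation, from strict monotonicity and linearity
  have hrc : ∀ {a b c : M}, a * c = b * c → a = b := by
    intro a b c h
    rcases lt_trichotomy a b with h' | h' | h'
    · exact absurd h (hmul_right a b c h').ne
    · exact h'
    · exact absurd h (hmul_right b a c h').ne'
  -- every element of A is > 1
  have haA : ∀ a ∈ A, 1 < a := fun a ha =>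
    lt_of_le_of_ne (hone a) (by rintro rfl; exact hA1 ha)
  -- a set admitting a strictly antitone map into a well-ordered set is finite,
  -- provided it is itself well-ordered
  have hfin : ∀ (S : Set M) (φ : M → M) (T : Set M), S.WellFoundedOn (· < ·) →
      T.WellFoundedOn (· < ·) → (∀ x ∈ S, φ x ∈ T) →
      (∀ x ∈ S, ∀ y ∈ S, x < y → φ y < φ x) → S.Finite := by
    intro S φ T hS hT hmem hanti
    by_contra hinf
    rw [← Set.Infinite] at hinf
    obtain g := hinf.natEmbedding
    have hSpwo : S.IsPWO := Set.isPWO_iff_isWF.mpr hS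
    obtain ⟨σ, hmono⟩ :=
      hSpwo.exists_monotone_subseq (f := fun n => (g n : M)) fun n => (g n).2
    set h : ℕ → M := fun n => (g (σ n) : M) with hh
    have hmemS : ∀ n, h n ∈ S := fun n => (g (σ n)).2
    have hstrict : StrictMono h := by
      intro m n hmn
      refine lt_of_le_of_ne (hmono hmn.le) fun heq => ?_
      exact hmn.ne (σ.injective (g.injective (Subtype.ext heq)))
    have hTwf := Set.isWF_iff_no_descending_seq.mp hT
    refine hTwf (fun n => φ (h n)) ?_ fun n => hmem _ (hmemS n)
    intro m n hmn
    exact hanti _ (hmemS m) _ (hmemS n) (hstrict hmn)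
  -- Part 2: finiteness of representations, by well-founded induction on C
  have hwf' : WellFounded (fun a b : C => (a : M) < (b : M)) := hCwf
  have key : ∀ t : C,
      {l : List M | l ≠ [] ∧ (∀ x ∈ l, x ∈ A) ∧ l.prod = (t : M)}.Finite := by
    intro t
    refine hwf'.induction
      (C := fun t : C =>
        {l : List M | l ≠ [] ∧ (∀ x ∈ l, x ∈ A) ∧ l.prod = (t : M)}.Finite)
      t ?_
    rintro ⟨x, hx⟩ IH
    simp only [Subtype.forall] at IH ⊢
    -- the set of possible "tails" of a representation of x
    set Q : Set M := {q : M | q ∈ C ∧ q < x ∧ ∃ a ∈ A, a * q = x} with hQdef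
    set φ : M → M := fun q =>
      if h : ∃ a ∈ A, a * q = x then h.choose else 1 with hφdef
    have hφ : ∀ q ∈ Q, φ q ∈ A ∧ φ q * q = x := by
      rintro q ⟨-, -, hq⟩
      simp only [hφdef, dif_pos hq]
      exact ⟨hq.choose_spec.1, hq.choose_spec.2⟩
    have hQfin : Q.Finite := by
      refine hfin Q φ A (hCwf.subset fun q hq => hq.1) hA
        (fun q hq => (hφ q hq).1) ?_
      intro q hq q' hq' hlt
      by_contra hle
      push_neg at hle
      have h1 : φ q * q < φ q * q' := hmul_left _ _ _ hlt
      have h2 : φ q * q' ≤ φ q' * q' := hmul_le hle le_rfl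
      rw [(hφ q hq).2, (hφ q' hq').2] at *
      exact absurd (h1.trans_le h2) (lt_irrefl x)
    -- the representations of x are covered by [x] and cons-extensions
    have hcov : {l : List M | l ≠ [] ∧ (∀ y ∈ l, y ∈ A) ∧ l.prod = x} ⊆
        insert [x] (⋃ q ∈ Q,
          (fun l : List M => φ q :: l) ''
            {l : List M | l ≠ [] ∧ (∀ y ∈ l, y ∈ A) ∧ l.prod = q}) := by
      rintro l ⟨hne, hmem, hprod⟩
      obtain ⟨a, l', rfl⟩ := List.exists_cons_of_ne_nil hne
      have haA' : a ∈ A := hmem a (by simp)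
      rw [List.prod_cons] at hprod
      rcases eq_or_ne l' [] with rfl | hl'
      · left
        simp only [List.prod_nil, mul_one] at hprod
        simp [hprod]
      · right
        set q := l'.prod with hq
        have hqC : q ∈ C := ⟨l', hl', fun y hy => hmem y (by simp [hy]), rfl⟩
        have hqlt : q < x := by
          calc q = 1 * q := (one_mul q).symm
            _ < a * q := hmul_right 1 a q (haA a haA')
            _ = x := hprod
        have hqQ : q ∈ Q := ⟨hqC, hqlt, a, haA', hprod⟩
        have hφq : φ q = a := hrc (((hφ q hqQ).2).trans hprod.symm)
        refine Set.mem_biUnion hqQ ⟨l', ⟨hl', fun y hy => hmem y (by simp [hy]), rfl⟩, ?_⟩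
        simp [hφq]
    refine (Set.Finite.insert _ ?_).subset hcov
    refine Set.Finite.biUnion hQfin fun q hq => ?_
    exact (IH q hq.1 hq.2.1).image _
  intro t ht
  exact key ⟨t, ht⟩
end

section
/- Let M be a monoid equipped with a linear order such that multiplication is strictly monotone on both sides and such that the identity 1 is the least element of M. Let A be a subset of M with 1 ∉ A that is well-ordered. Then there is no sequence of nonempty finite lists s₁, s₂, s₃, … , each with all entries in A, whose products satisfy s₁.prod > s₂.prod > s₃.prod > ⋯ ; equivalently, the set of all products of strings over A is well-ordered. -/
/-- Lemma A: there is no sequence of nonempty finite lists with entries in `A`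
whose products are strictly decreasing; equivalently, the set of all such
products is well-ordered. -/
theorem neumann_lemma_A {M : Type*} [Monoid M] [LinearOrder M]
    (hmul_right : ∀ a b c : M, a < b → a * c < b * c)
    (hmul_left : ∀ a b c : M, a < b → c * a < c * b)
    (hone : ∀ a : M, 1 ≤ a)
    (A : Set M) (hA1 : (1 : M) ∉ A) (hA : A.WellFoundedOn (· < ·)) :
    (¬∃ s : ℕ → List M,
        (∀ n, s n ≠ [] ∧ ∀ x ∈ s n, x ∈ A) ∧
        (∀ n, (s (n + 1)).prod < (s n).prod)) ∧
    ({t : M | ∃ l : List M, l ≠ [] ∧ (∀ x ∈ l, x ∈ A) ∧ l.prod = t}.WellFoundedOn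
        (· < ·)) := by
  haveI : MulLeftMono M :=
    ⟨fun c a b h => h.lt_or_eq.elim (fun h' => (hmul_left a b c h').le)
      (fun h' => by rw [h'])⟩
  haveI : MulRightMono M :=
    ⟨fun c a b h => h.lt_or_eq.elim (fun h' => (hmul_right a b c h').le)
      (fun h' => by rw [h'])⟩
  have hAWF : A.IsWF := hA
  have hPWO : {l : List M | ∀ x, x ∈ l → x ∈ A}.PartiallyWellOrderedOn
      (List.SublistForall₂ (· ≤ ·)) :=
    Set.PartiallyWellOrderedOn.partiallyWellOrderedOn_sublistForall₂ _ hAWF.isPWO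
  have key : ¬∃ s : ℕ → List M,
      (∀ n, s n ≠ [] ∧ ∀ x ∈ s n, x ∈ A) ∧
      (∀ n, (s (n + 1)).prod < (s n).prod) := by
    rintro ⟨s, hs, hdec⟩
    obtain ⟨i, j, hij, hsub⟩ := hPWO (fun n => ⟨s n, fun x hx => (hs n).2 x hx⟩)
    have hle : (s i).prod ≤ (s j).prod := hsub.prod_le_prod' (fun a _ => hone a)
    have hlt : (s j).prod < (s i).prod := strictAnti_nat_of_succ_lt (f := fun n => (s n).prod) hdec hij
    exact absurd hle hlt.not_ge
  refine ⟨key, ?_⟩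
  have : ({t : M | ∃ l : List M, l ≠ [] ∧ (∀ x ∈ l, x ∈ A) ∧ l.prod = t}).IsWF := by
    rw [Set.isWF_iff_no_descending_seq]
    intro f hf hmem
    choose l hl1 hl2 hl3 using hmem
    exact key ⟨l, fun n => ⟨hl1 n, hl2 n⟩, fun n => by
      rw [hl3 n, hl3 (n + 1)]; exact hf (Nat.lt_succ_self n)⟩
  exact this
end

section
/- Let M be a monoid equipped with a linear order such that multiplication is strictly monotone on both sides and such that the identity 1 is the least element of M. Let A be a subset of M with 1 ∉ A that is well-ordered. Then for every t in M, the set of nonempty finite lists l with all entries in A and l.prod = t is finite; that is, each product has only finitely many representatives as a string over A. -/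
/-- Lemma B: each element of `M` has only finitely many representations as the
product of a nonempty finite list with entries in `A`. -/
theorem neumann_lemma_B {M : Type*} [Monoid M] [LinearOrder M]
    (hmul_right : ∀ a b c : M, a < b → a * c < b * c)
    (hmul_left : ∀ a b c : M, a < b → c * a < c * b)
    (hone : ∀ a : M, 1 ≤ a)
    (A : Set M) (hA1 : (1 : M) ∉ A) (hA : A.WellFoundedOn (· < ·)) :
    ∀ t : M, {l : List M | l ≠ [] ∧ (∀ x ∈ l, x ∈ A) ∧ l.prod = t}.Finite := by
  classical
  -- monotonicity of multiplication with respect to ≤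
  have hle_left : ∀ a b c : M, a ≤ b → c * a ≤ c * b := by
    intro a b c h
    rcases h.lt_or_eq with h | rfl
    · exact (hmul_left a b c h).le
    · exact le_rfl
  have hle_right : ∀ a b c : M, a ≤ b → a * c ≤ b * c := by
    intro a b c h
    rcases h.lt_or_eq with h | rfl
    · exact (hmul_right a b c h).le
    · exact le_rfl
  have hcancel : ∀ a b c : M, a * b = a * c → b = c := by
    intro a b c h
    rcases lt_trichotomy b c with h' | h' | h'
    · exact absurd h (hmul_left b c a h').ne
    · exact h'
    · exact absurd h.symm (hmul_left c b a h').ne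
  have ha1 : ∀ a ∈ A, 1 < a := fun a ha =>
    (hone a).lt_of_ne fun e => hA1 (e ▸ ha)
  haveI : CovariantClass M M (· * ·) (· ≤ ·) := ⟨fun c a b h => hle_left a b c h⟩
  haveI : CovariantClass M M (Function.swap (· * ·)) (· ≤ ·) :=
    ⟨fun c a b h => hle_right a b c h⟩
  -- the set of all products of (possibly empty) lists with entries in `A`
  set P : Set M := List.prod '' {l : List M | ∀ x, x ∈ l → x ∈ A} with hPdef
  have hAwf : A.IsWF := hA
  have hApwo : A.IsPWO := hAwf.isPWO
  have hPpwo : P.IsPWO := by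
    refine ((hApwo).partiallyWellOrderedOn_sublistForall₂ (· ≤ ·)).image_of_monotone_on ?_
    exact fun l1 _ l2 _ h12 => h12.prod_le_prod' fun x _ => hone x
  have hPwf : P.WellFoundedOn (· < ·) := hPpwo.isWF
  -- notation for the sets of representations
  set Reps : M → Set (List M) :=
    fun t => {l : List M | l ≠ [] ∧ (∀ x ∈ l, x ∈ A) ∧ l.prod = t} with hReps
  -- the main induction on `t ∈ P`
  have main : ∀ t ∈ P, (Reps t).Finite := by
    intro t ht
    refine hPwf.induction (P := fun t => (Reps t).Finite) ht ?_
    intro t ht IH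
    -- possible first letters
    set F : Set M := {a | a ∈ A ∧ ∃ l : List M, (∀ x, x ∈ l → x ∈ A) ∧ a * l.prod = t}
      with hFdef
    -- the tail product associated to a first letter
    set p : M → M := fun a => if h : ∃ q, a * q = t then h.choose else 1 with hpdef
    have hp : ∀ a ∈ F, a * p a = t := by
      intro a ha
      obtain ⟨-, l, -, hl⟩ := id ha
      have h : ∃ q, a * q = t := ⟨l.prod, hl⟩
      simp only [hpdef, dif_pos h]
      exact h.choose_spec
    have hpP : ∀ a ∈ F, p a ∈ P := by
      intro a ha
      obtain ⟨-, l, hlA, hl⟩ := id ha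
      have : p a = l.prod := hcancel a _ _ (by rw [hp a ha, hl])
      exact this ▸ ⟨l, hlA, rfl⟩
    have hplt : ∀ a ∈ F, p a < t := by
      intro a ha
      have h1 : 1 < a := ha1 a ha.1
      have := hmul_right 1 a (p a) h1
      rw [one_mul, hp a ha] at this
      exact this
    -- strict antitonicity of the tail product in the first letter
    have hanti : ∀ a ∈ F, ∀ b ∈ F, a < b → p b < p a := by
      intro a ha b hb hab
      by_contra hle
      push_neg at hle
      have h1 : a * p a ≤ a * p b := hle_left _ _ _ hle
      have h2 : a * p b < b * p b := hmul_right a b (p b) hab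
      rw [hp a ha, hp b hb] at *
      exact absurd (h1.trans_lt h2) (lt_irrefl t)
    -- the set of possible first letters is finite
    have hFfin : F.Finite := by
      by_contra hinf
      replace hinf : F.Infinite := hinf
      set f : ℕ → M := fun n => (hinf.natEmbedding _ n : M) with hfdef
      have hfF : ∀ n, f n ∈ F := fun n => (hinf.natEmbedding _ n).2
      have hfinj : Function.Injective f :=
        fun m n h => (hinf.natEmbedding _).injective (Subtype.val_injective h)
      have hFpwo : F.IsPWO := hApwo.mono fun a ha => ha.1
      obtain ⟨g, hg⟩ := hFpwo.exists_monotone_subseq hfF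
      have hdesc : StrictAnti fun n => p (f (g n)) := by
        intro m n hmn
        have hle : f (g m) ≤ f (g n) := hg hmn.le
        have hne : f (g m) ≠ f (g n) := fun e => hmn.ne (g.injective (hfinj e))
        exact hanti _ (hfF (g m)) _ (hfF (g n)) (hle.lt_of_ne hne)
      have := Set.isWF_iff_no_descending_seq.1 hPpwo.isWF _ hdesc
      exact this fun n => hpP _ (hfF (g n))
    -- every representation of `t` decomposes through a first letter
    have hsub : Reps t ⊆ ⋃ a ∈ F, ({[a]} ∪ List.cons a '' Reps (p a)) := by
      rintro l ⟨hne, hlA, hprod⟩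
      obtain ⟨a, l', rfl⟩ := List.exists_cons_of_ne_nil hne
      have haA : a ∈ A := hlA a List.mem_cons_self
      have hl'A : ∀ x, x ∈ l' → x ∈ A := fun x hx => hlA x (List.mem_cons_of_mem a hx)
      have haF : a ∈ F := ⟨haA, l', hl'A, by rw [← List.prod_cons]; exact hprod⟩
      have hl'prod : l'.prod = p a := by
        refine hcancel a _ _ ?_
        rw [hp a haF, ← hprod, List.prod_cons]
      refine Set.mem_biUnion haF ?_
      rcases eq_or_ne l' [] with rfl | hne'
      · left; rfl
      · right
        exact ⟨l', ⟨hne', fun x hx => hl'A x hx, hl'prod⟩, rfl⟩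
    refine Set.Finite.subset ?_ hsub
    refine hFfin.biUnion fun a ha => ?_
    exact (Set.finite_singleton _).union
      ((IH (p a) (hpP a ha) (hplt a ha)).image _)
  intro t
  by_cases ht : t ∈ P
  · exact main t ht
  · refine Set.finite_empty.subset ?_
    rintro l ⟨-, hlA, hprod⟩
    exact absurd ⟨l, hlA, hprod⟩ ht
end
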